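/- Let E be a real locally convex topological vector space. Let Ω ⊆ E be a nonempty open convex cone and let f : Ω → ℝ be a continuous, positively homogeneous, convex function. Then there exists a unique subset C of the topological dual E′ with the following properties: C is convex and closed in the weak-* topology; C is semi-equicontinuous; the interior of B(−C) = {x ∈ E : s_C(x) < ∞} is exactly Ω; and s_C(x) = f(x) for every x ∈ Ω. (This is the Duality Theorem: C ↦ s_C|_{B(−C)⁰} is a bijection from semi-equicontinuous weak-*-closed convex subsets of E′ onto continuous positively homogeneous convex functions on nonempty open convex cones.) -/

import Mathlib

open Set Filter Topology

/-- The support functional `s_C : E → [-∞,∞]` of a set `C` of continuous linear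
functionals, `s_C(x) = sup_{α ∈ C} α(x)`. -/
noncomputable def supportFunctional {E : Type*} [AddCommGroup E] [Module ℝ E]
    [TopologicalSpace E] (C : Set (WeakDual ℝ E)) (x : E) : EReal :=
  sSup ((fun α : WeakDual ℝ E => (α x : EReal)) '' C)

/-- `C ⊆ E'` is semi-equicontinuous if its support functional is bounded above on some
nonempty open subset of `E`. -/
def SemiEquicontinuous {E : Type*} [AddCommGroup E] [Module ℝ E]
    [TopologicalSpace E] (C : Set (WeakDual ℝ E)) : Prop :=
  ∃ U : Set E, U.Nonempty ∧ IsOpen U ∧ ∃ M : ℝ, ∀ α ∈ C, ∀ u ∈ U, α u ≤ M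

section Aux

variable {E : Type*} [AddCommGroup E] [Module ℝ E] [TopologicalSpace E]

instance : LocallyConvexSpace ℝ (WeakDual ℝ E) := WeakBilin.locallyConvexSpace

/-- Evaluation at a point, as a linear map on the weak dual. -/
noncomputable def evalLM (x : E) : WeakDual ℝ E →ₗ[ℝ] ℝ := (topDualPairing ℝ E).flip x

@[simp] lemma evalLM_apply (x : E) (α : WeakDual ℝ E) : evalLM x α = α x := rfl

/-- Every continuous linear functional on the weak-* dual is evaluation at a point. -/
theorem weakDual_clm_eq_eval (φ : WeakDual ℝ E →L[ℝ] ℝ) :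
    ∃ z : E, ∀ α : WeakDual ℝ E, φ α = α z := by
  have hb := LinearMap.hasBasis_weakBilin (topDualPairing ℝ E)
  have h0 : φ ⁻¹' (Set.Ioo (-1 : ℝ) 1) ∈ 𝓝 (0 : WeakDual ℝ E) := by
    have : Set.Ioo (-1 : ℝ) 1 ∈ 𝓝 (φ 0) := by
      rw [map_zero]; exact Ioo_mem_nhds (by norm_num) (by norm_num)
    exact φ.continuous.continuousAt.preimage_mem_nhds this
  replace h0 := hb.mem_iff.1 h0
  obtain ⟨U, hU, hUsub⟩ := h0
  obtain ⟨s, r, hr, rfl⟩ := (SeminormFamily.basisSets_iff _).1 hU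
  have hker : ∀ α : WeakDual ℝ E, (∀ x ∈ s, α x = 0) → φ α = 0 := by
    intro α hα
    by_contra hne
    set c : ℝ := 2 / |φ α| with hc
    have hφα : 0 < |φ α| := abs_pos.mpr hne
    have hmem : (c • α) ∈ (s.sup ((topDualPairing ℝ E).toSeminormFamily)).ball 0 r := by
      refine (Seminorm.mem_ball_zero _).2 ?_
      rcases s.eq_empty_or_nonempty with rfl | hs
      · exact hr
      · apply Seminorm.finset_sup_apply_lt hr
        intro x hx
        have h0 : ((topDualPairing ℝ E) α) x = 0 := hα x hx
        show ‖c • (((topDualPairing ℝ E) α) x)‖ < r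
        rw [h0]
        simpa using hr
    have : φ (c • α) ∈ Set.Ioo (-1:ℝ) 1 := hUsub hmem
    simp only [Set.mem_preimage, Set.mem_Ioo] at this
    have h2 : φ (c • α) = c * φ α := by rw [map_smul]; rfl
    rw [h2] at this
    have : |c * φ α| < 1 := abs_lt.mpr this
    rw [abs_mul, hc, abs_div] at this
    simp only [abs_abs] at this
    rw [abs_of_nonneg (by norm_num : (0:ℝ) ≤ 2)] at this
    rw [div_mul_cancel₀] at this
    · norm_num at this
    · exact ne_of_gt hφα
  haveI : Finite {x // x ∈ s} := inferInstance
  have hsub : ⨅ x : {x // x ∈ s}, LinearMap.ker (evalLM (E := E) (x : E)) ≤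
      LinearMap.ker (φ : WeakDual ℝ E →ₗ[ℝ] ℝ) := by
    intro α hα
    rw [Submodule.mem_iInf] at hα
    exact hker α fun x hx => hα ⟨x, hx⟩
  have hspan := mem_span_of_iInf_ker_le_ker hsub
  obtain ⟨c, hc⟩ := (Submodule.mem_span_range_iff_exists_fun ℝ).1 hspan
  refine ⟨∑ x : {x // x ∈ s}, c x • (x : E), fun α => ?_⟩
  have := LinearMap.congr_fun hc α
  simp only [LinearMap.coe_sum, Finset.sum_apply, LinearMap.smul_apply, evalLM_apply,
    smul_eq_mul, LinearMap.coe_coe] at this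
  have h1 : (φ : WeakDual ℝ E →ₗ[ℝ] ℝ) α = φ α := rfl
  have h2 : α (∑ x : {x // x ∈ s}, c x • (x : E)) = ∑ x : {x // x ∈ s}, c x * α (x : E) := by
    rw [map_sum]
    refine Finset.sum_congr rfl fun x _ => ?_
    rw [map_smul]
    rfl
  rw [h2]
  exact (this.trans h1).symm

lemma le_supportFunctional {C : Set (WeakDual ℝ E)} {α : WeakDual ℝ E} (hα : α ∈ C) (x : E) :
    ((α x : ℝ) : EReal) ≤ supportFunctional C x := le_sSup ⟨α, hα, rfl⟩

lemma supportFunctional_le {C : Set (WeakDual ℝ E)} {x : E} {r : ℝ}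
    (h : ∀ α ∈ C, (α : WeakDual ℝ E) x ≤ r) : supportFunctional C x ≤ (r : EReal) := by
  refine sSup_le ?_
  rintro _ ⟨α, hα, rfl⟩
  exact EReal.coe_le_coe_iff.2 (h α hα)

lemma supportFunctional_lt_top_iff {C : Set (WeakDual ℝ E)} {x : E} :
    supportFunctional C x < ⊤ ↔ ∃ r : ℝ, ∀ α ∈ C, (α : WeakDual ℝ E) x ≤ r := by
  constructor
  · intro h
    rcases C.eq_empty_or_nonempty with rfl | ⟨α₀, hα₀⟩
    · exact ⟨0, by simp⟩
    · have hbot : supportFunctional C x ≠ ⊥ :=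
        fun hb => by simpa [hb] using le_supportFunctional hα₀ x
      refine ⟨(supportFunctional C x).toReal, fun α hα => ?_⟩
      have := le_supportFunctional hα x
      rw [← EReal.coe_toReal h.ne hbot] at this
      exact EReal.coe_le_coe_iff.1 this
  · rintro ⟨r, hr⟩
    exact lt_of_le_of_lt (supportFunctional_le hr) (EReal.coe_lt_top r)

end Aux

section Support

variable {E : Type*} [AddCommGroup E] [Module ℝ E] [TopologicalSpace E]
  [IsTopologicalAddGroup E] [ContinuousSMul ℝ E] [LocallyConvexSpace ℝ E]

/-- Existence of an exact supporting functional at each point of the cone. -/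
theorem exists_support_functional (Ω : Set E) (hΩopen : IsOpen Ω) (hΩconv : Convex ℝ Ω)
    (hΩcone : ∀ t : ℝ, 0 < t → ∀ x ∈ Ω, t • x ∈ Ω)
    (f : E → ℝ) (hfcont : ContinuousOn f Ω)
    (hfhom : ∀ t : ℝ, 0 < t → ∀ x ∈ Ω, f (t • x) = t * f x)
    (hfconv : ConvexOn ℝ Ω f) {x : E} (hx : x ∈ Ω) :
    ∃ α : E →L[ℝ] ℝ, (∀ y ∈ Ω, α y ≤ f y) ∧ α x = f x := by
  -- the open epigraph
  set S : Set (E × ℝ) := {p | p.1 ∈ Ω ∧ f p.1 < p.2} with hS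
  have hSopen : IsOpen S := by
    have h1 : ContinuousOn (fun p : E × ℝ => f p.1 - p.2) (Ω ×ˢ (univ : Set ℝ)) := by
      refine ContinuousOn.sub ?_ continuous_snd.continuousOn
      exact hfcont.comp continuous_fst.continuousOn fun p hp => hp.1
    have h2 := h1.isOpen_inter_preimage (hΩopen.prod isOpen_univ) isOpen_Iio (t := Iio (0:ℝ))
    have h3 : S = (Ω ×ˢ (univ : Set ℝ)) ∩ (fun p : E × ℝ => f p.1 - p.2) ⁻¹' Iio 0 := by
      ext p
      simp only [hS, mem_setOf_eq, mem_inter_iff, mem_prod, mem_univ, and_true, mem_preimage,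
        mem_Iio, sub_neg]
    rwa [h3]
  have hSconv : Convex ℝ S := by
    rintro p ⟨hp1, hp2⟩ q ⟨hq1, hq2⟩ a b ha hb hab
    have hmem : (a • p + b • q).1 ∈ Ω := hΩconv hp1 hq1 ha hb hab
    refine ⟨hmem, ?_⟩
    have hgoal : f (a • p + b • q).1 ≤ a * f p.1 + b * f q.1 := hfconv.2 hp1 hq1 ha hb hab
    have h2 : (a • p + b • q).2 = a * p.2 + b * q.2 := rfl
    show f (a • p + b • q).1 < (a • p + b • q).2
    rw [h2]
    rcases eq_or_lt_of_le ha with rfl | ha'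
    · have hb1 : b = 1 := by linarith
      subst hb1
      linarith
    · have e1 : a * f p.1 < a * p.2 := (mul_lt_mul_iff_right₀ ha').2 hp2
      have e2 : b * f q.1 ≤ b * q.2 := mul_le_mul_of_nonneg_left hq2.le hb
      linarith
  have hdisj : Disjoint S {((x, f x) : E × ℝ)} := by
    rw [disjoint_singleton_right]
    rintro ⟨-, h2⟩
    exact lt_irrefl _ h2
  obtain ⟨φ, u, hφ1, hφ2⟩ :=
    geometric_hahn_banach_open hSconv hSopen (convex_singleton _) hdisj
  set β : E →L[ℝ] ℝ := φ.comp (ContinuousLinearMap.inl ℝ E ℝ) with hβ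
  set c : ℝ := φ (0, 1) with hcdef
  have hsplit : ∀ (y : E) (t : ℝ), φ (y, t) = β y + t * c := by
    intro y t
    have h1 : ((y, t) : E × ℝ) = (y, 0) + t • ((0 : E), (1 : ℝ)) := by
      simp [Prod.ext_iff]
    rw [h1, map_add, map_smul]
    simp only [hβ, ContinuousLinearMap.comp_apply, ContinuousLinearMap.inl_apply, smul_eq_mul,
      hcdef]
  have key : ∀ y ∈ Ω, ∀ t : ℝ, f y < t → β y + t * c < u := by
    intro y hy t ht
    have := hφ1 (y, t) ⟨hy, ht⟩
    rwa [hsplit] at this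
  have hu : u ≤ β x + f x * c := by
    have := hφ2 _ (mem_singleton _)
    rwa [hsplit] at this
  have hcneg : c < 0 := by
    have h1 := key x hx (f x + 1) (lt_add_one _)
    nlinarith
  have hineq : ∀ y ∈ Ω, β y + f y * c ≤ u := by
    intro y hy
    by_contra hlt
    push_neg at hlt
    set δ : ℝ := β y + f y * c - u with hδdef
    have hδpos : 0 < δ := by linarith
    have hc2 : (0:ℝ) < 2 * (-c) := by linarith
    have hstep : 0 < δ / (2 * (-c)) := div_pos hδpos hc2
    have h1 := key y hy (f y + δ / (2 * (-c))) (by linarith)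
    have h2 : δ / (2 * (-c)) * c = -(δ / 2) := by
      rw [div_mul_eq_mul_div, div_eq_iff (by linarith : (2:ℝ) * -c ≠ 0)]
      ring
    have h3 : β y + (f y + δ / (2 * (-c))) * c = β y + f y * c + δ / (2 * (-c)) * c := by ring
    rw [h3, h2] at h1
    linarith
  -- the supporting functional
  set α : E →L[ℝ] ℝ := (-c)⁻¹ • β with hαdef
  have hinv : (0:ℝ) < (-c)⁻¹ := inv_pos.2 (by linarith)
  have hαapp : ∀ y : E, α y = (-c)⁻¹ * β y := fun y => rfl
  have hcc : (-c)⁻¹ * c = -1 := by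
    rw [inv_mul_eq_div, div_neg, div_self (ne_of_lt hcneg)]
  have hαle : ∀ y ∈ Ω, α y - f y ≤ α x - f x := by
    intro y hy
    have h1 : β y + f y * c ≤ β x + f x * c := (hineq y hy).trans hu
    have h2 := mul_le_mul_of_nonneg_left h1 hinv.le
    have e1 : (-c)⁻¹ * (β y + f y * c) = (-c)⁻¹ * β y + f y * ((-c)⁻¹ * c) := by ring
    have e2 : (-c)⁻¹ * (β x + f x * c) = (-c)⁻¹ * β x + f x * ((-c)⁻¹ * c) := by ring
    rw [e1, e2, hcc] at h2
    rw [hαapp, hαapp]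
    linarith
  have hαy : ∀ y ∈ Ω, α y ≤ f y := by
    intro y hy
    by_contra h
    push_neg at h
    set d : ℝ := α y - f y with hddef
    have hd : 0 < d := by linarith
    set K : ℝ := α x - f x with hKdef
    set s : ℝ := (|K| + 1) / d with hsdef
    have hs : 0 < s := div_pos (by positivity) hd
    have h1 := hαle _ (hΩcone s hs y hy)
    have h2 : α (s • y) = s * α y := by rw [map_smul]; rfl
    have h3 : f (s • y) = s * f y := hfhom s hs y hy
    rw [h2, h3] at h1
    have h4 : s * d = |K| + 1 := div_mul_cancel₀ _ hd.ne'
    have h5 : s * α y - s * f y = s * d := by rw [hddef]; ring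
    rw [h5, h4] at h1
    have := le_abs_self K
    linarith
  have hK0 : α x - f x ≤ 0 := by linarith [hαy x hx]
  have hK0' : 0 ≤ α x - f x := by
    have h1 := hαle _ (hΩcone (1/2) (by norm_num) x hx)
    have h2 : α ((1/2 : ℝ) • x) = (1/2) * α x := by rw [map_smul]; rfl
    have h3 : f ((1/2 : ℝ) • x) = (1/2) * f x := hfhom _ (by norm_num) x hx
    rw [h2, h3] at h1
    linarith
  exact ⟨α, hαy, by linarith⟩

end Support

theorem duality_theorem
    {E : Type*} [AddCommGroup E] [Module ℝ E] [TopologicalSpace E]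
    [IsTopologicalAddGroup E] [ContinuousSMul ℝ E] [LocallyConvexSpace ℝ E]
    (Ω : Set E) (hΩne : Ω.Nonempty) (hΩopen : IsOpen Ω) (hΩconv : Convex ℝ Ω)
    (hΩcone : ∀ t : ℝ, 0 < t → ∀ x ∈ Ω, t • x ∈ Ω)
    (f : E → ℝ) (hfcont : ContinuousOn f Ω)
    (hfhom : ∀ t : ℝ, 0 < t → ∀ x ∈ Ω, f (t • x) = t * f x)
    (hfconv : ConvexOn ℝ Ω f) :
    ∃! C : Set (WeakDual ℝ E),
      Convex ℝ C ∧ IsClosed C ∧ SemiEquicontinuous C ∧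
      interior {x : E | supportFunctional C x < ⊤} = Ω ∧
      ∀ x ∈ Ω, supportFunctional C x = (f x : EReal) := by
  classical
  obtain ⟨x₀, hx₀⟩ := hΩne
  set C : Set (WeakDual ℝ E) := {α : WeakDual ℝ E | ∀ y ∈ Ω, α y ≤ f y} with hCdef
  have hsupp : ∀ x ∈ Ω, ∃ α : WeakDual ℝ E, α ∈ C ∧ α x = f x := by
    intro x hx
    obtain ⟨α, h1, h2⟩ := exists_support_functional Ω hΩopen hΩconv hΩcone f hfcont hfhom
      hfconv hx
    exact ⟨α, h1, h2⟩
  obtain ⟨α₀, hα₀C, -⟩ := hsupp x₀ hx₀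
  -- value property
  have hval : ∀ x ∈ Ω, supportFunctional C x = (f x : EReal) := by
    intro x hx
    obtain ⟨α, hαC, hαx⟩ := hsupp x hx
    refine le_antisymm (supportFunctional_le fun β hβ => hβ x hx) ?_
    calc ((f x : ℝ) : EReal) = ((α x : ℝ) : EReal) := by rw [hαx]
      _ ≤ supportFunctional C x := le_supportFunctional hαC x
  -- convexity
  have hconv : Convex ℝ C := by
    intro α hα β hβ a b ha hb hab y hy
    show a * α y + b * β y ≤ f y
    have h1 : a * α y ≤ a * f y := mul_le_mul_of_nonneg_left (hα y hy) ha
    have h2 : b * β y ≤ b * f y := mul_le_mul_of_nonneg_left (hβ y hy) hb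
    have h3 : a * f y + b * f y = f y := by rw [← add_mul, hab, one_mul]
    linarith
  -- closedness
  have hclosed : IsClosed C := by
    have h1 : C = ⋂ y ∈ Ω, {α : WeakDual ℝ E | α y ≤ f y} := by
      ext α; simp [hCdef]
    rw [h1]
    exact isClosed_biInter fun y _ =>
      isClosed_le (WeakDual.eval_continuous y) continuous_const
  -- semi-equicontinuity
  have hsec : SemiEquicontinuous C := by
    refine ⟨Ω ∩ f ⁻¹' (Iio (f x₀ + 1)), ⟨x₀, hx₀, by simp⟩,
      hfcont.isOpen_inter_preimage hΩopen isOpen_Iio, f x₀ + 1, fun α hα u hu => ?_⟩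
    exact (hα u hu.1).trans (le_of_lt hu.2)
  -- interior of the barrier cone
  have hint : interior {x : E | supportFunctional C x < ⊤} = Ω := by
    apply Subset.antisymm
    · intro z hz
      by_contra hzΩ
      obtain ⟨γ, u, hγ1, hγ2⟩ := geometric_hahn_banach_open hΩconv hΩopen
        (convex_singleton z) (disjoint_singleton_right.2 hzΩ)
      have huz : u ≤ γ z := hγ2 z (mem_singleton z)
      have hγle : ∀ y ∈ Ω, γ y ≤ 0 := by
        intro y hy
        by_contra h
        push_neg at h
        have hs : 0 < (|u| + 1) / γ y := div_pos (by positivity) h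
        have h1 := hγ1 _ (hΩcone _ hs y hy)
        rw [map_smul, smul_eq_mul] at h1
        have h2 : (|u| + 1) / γ y * γ y = |u| + 1 := div_mul_cancel₀ _ (ne_of_gt h)
        rw [h2] at h1
        linarith [le_abs_self u]
      have hu0 : 0 ≤ u := by
        rcases eq_or_lt_of_le (hγle x₀ hx₀) with h | h
        · linarith [hγ1 x₀ hx₀]
        · by_contra hu
          push_neg at hu
          have ht : 0 < u / γ x₀ := div_pos_of_neg_of_neg hu h
          have h1 := hγ1 _ (hΩcone _ ht x₀ hx₀)
          rw [map_smul, smul_eq_mul] at h1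
          have h2 : u / γ x₀ * γ x₀ = u := div_mul_cancel₀ _ (ne_of_lt h)
          rw [h2] at h1
          exact lt_irrefl u h1
      set γ' : WeakDual ℝ E := γ with hγ'def
      have hcontra : ∀ w : E, 0 < γ w → supportFunctional C w < ⊤ → False := by
        intro w hw hwD
        obtain ⟨r, hr⟩ := supportFunctional_lt_top_iff.1 hwD
        set t : ℝ := (|r| + |α₀ w| + 1) / γ w with htdef
        have ht : 0 < t := div_pos (by positivity) hw
        have hmem : (α₀ + t • γ') ∈ C := by
          intro y hy
          show α₀ y + t * γ y ≤ f y
          have h1 := hα₀C y hy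
          have h2 := hγle y hy
          nlinarith
        have h3 : (α₀ + t • γ') w ≤ r := hr _ hmem
        have h4 : (α₀ + t • γ') w = α₀ w + t * γ w := rfl
        have h5 : t * γ w = |r| + |α₀ w| + 1 := div_mul_cancel₀ _ hw.ne'
        rw [h4, h5] at h3
        have := le_abs_self r
        have := neg_abs_le (α₀ w)
        linarith
      have hγz : 0 ≤ γ z := le_trans hu0 huz
      rcases eq_or_lt_of_le hγz with hzz | hzz
      · -- γ z = 0; perturb z towards -x₀ to get a point with positive γ-value
        have hγx₀ : γ x₀ < 0 := by
          have := hγ1 x₀ hx₀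
          linarith
        have htend : Tendsto (fun s : ℝ => z - s • x₀) (𝓝[>] (0:ℝ)) (𝓝 z) := by
          have hcont : Continuous fun s : ℝ => z - s • x₀ :=
            continuous_const.sub (continuous_id.smul continuous_const)
          have h1 := hcont.tendsto 0
          simp only [zero_smul, sub_zero] at h1
          exact h1.mono_left nhdsWithin_le_nhds
        have hev : ∀ᶠ s in 𝓝[>] (0:ℝ),
            z - s • x₀ ∈ interior {x : E | supportFunctional C x < ⊤} :=
          htend.eventually_mem (isOpen_interior.mem_nhds hz)
        obtain ⟨s, hsV, hs⟩ := (hev.and eventually_mem_nhdsWithin).exists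
        have hmem : supportFunctional C (z - s • x₀) < ⊤ := by
          have h7 := interior_subset hsV
          rwa [mem_setOf_eq] at h7
        refine hcontra (z - s • x₀) ?_ hmem
        have h6 : γ (z - s • x₀) = γ z - s * γ x₀ := by
          rw [map_sub, map_smul, smul_eq_mul]
        rw [h6, ← hzz]
        have hs' : (0:ℝ) < s := hs
        nlinarith
      · refine hcontra z hzz ?_
        have h7 := interior_subset hz
        rwa [mem_setOf_eq] at h7
    · refine interior_maximal (fun x hx => ?_) hΩopen
      rw [mem_setOf_eq, hval x hx]
      exact EReal.coe_lt_top _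
  refine ⟨C, ⟨hconv, hclosed, hsec, hint, hval⟩, ?_⟩
  rintro C' ⟨hconv', hclosed', -, hint', hval'⟩
  have hC'ne : C'.Nonempty := by
    rcases C'.eq_empty_or_nonempty with rfl | h
    · exfalso
      have h1 := hval' x₀ hx₀
      have h2 : supportFunctional (∅ : Set (WeakDual ℝ E)) x₀ = ⊥ := by
        simp [supportFunctional]
      rw [h2] at h1
      simp at h1
    · exact h
  have hsub1 : C' ⊆ C := by
    intro α hα y hy
    have h1 := le_supportFunctional hα y
    rw [hval' y hy] at h1
    exact EReal.coe_le_coe_iff.1 h1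
  have hsub2 : C ⊆ C' := by
    intro β hβ
    by_contra hβ'
    obtain ⟨φ, u, hφ1, hφ2⟩ := geometric_hahn_banach_closed_point hconv' hclosed' hβ'
    obtain ⟨z, hz⟩ := weakDual_clm_eq_eval φ
    have hkey : ((β z : ℝ) : EReal) ≤ supportFunctional C' z := by
      by_cases hD : supportFunctional C' z < ⊤
      · obtain ⟨α', hα'⟩ := hC'ne
        have hzbot : supportFunctional C' z ≠ ⊥ := fun hb => by
          simpa [hb] using le_supportFunctional hα' z
        set m : ℝ := (supportFunctional C' z).toReal with hm
        have hms : supportFunctional C' z = (m : EReal) := (EReal.coe_toReal hD.ne hzbot).symm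
        rw [hms, EReal.coe_le_coe_iff]
        have hbz : ∀ α ∈ C', (α : WeakDual ℝ E) z ≤ m := by
          intro α hα
          have h1 := le_supportFunctional hα z
          rw [hms] at h1
          exact EReal.coe_le_coe_iff.1 h1
        have hconvD : Convex ℝ {x : E | supportFunctional C' x < ⊤} := by
          intro p hp q hq a b ha hb hab
          rw [mem_setOf_eq] at hp hq
          obtain ⟨r1, h1⟩ := supportFunctional_lt_top_iff.1 hp
          obtain ⟨r2, h2⟩ := supportFunctional_lt_top_iff.1 hq
          show supportFunctional C' (a • p + b • q) < ⊤
          refine supportFunctional_lt_top_iff.2 ⟨a * r1 + b * r2, fun α hα => ?_⟩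
          have e : (α : WeakDual ℝ E) (a • p + b • q) = a * α p + b * α q := by
            rw [map_add, map_smul, map_smul]
            rfl
          rw [e]
          have e1 := mul_le_mul_of_nonneg_left (h1 α hα) ha
          have e2 := mul_le_mul_of_nonneg_left (h2 α hα) hb
          linarith
        have hzD : z ∈ {x : E | supportFunctional C' x < ⊤} := hD
        have hx₀i : x₀ ∈ interior {x : E | supportFunctional C' x < ⊤} := by
          rw [hint']
          exact hx₀
        have hpt : ∀ t : ℝ, 0 < t → t ≤ 1 → (1 - t) • z + t • x₀ ∈ Ω := by
          intro t ht ht1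
          have h1 := hconvD.combo_self_interior_mem_interior hzD hx₀i
            (by linarith : (0:ℝ) ≤ 1 - t) ht (by ring)
          rwa [hint'] at h1
        have hineq2 : ∀ t : ℝ, 0 < t → t ≤ 1 →
            (1 - t) * β z + t * β x₀ ≤ (1 - t) * m + t * f x₀ := by
          intro t ht ht1
          have hp := hpt t ht ht1
          have h1 : (β : WeakDual ℝ E) ((1-t) • z + t • x₀) ≤ f ((1-t) • z + t • x₀) :=
            hβ _ hp
          have h3 : supportFunctional C' ((1-t) • z + t • x₀)
              ≤ (((1-t) * m + t * f x₀ : ℝ) : EReal) := by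
            apply supportFunctional_le
            intro α hα
            have e : (α : WeakDual ℝ E) ((1-t) • z + t • x₀) = (1-t) * α z + t * α x₀ := by
              rw [map_add, map_smul, map_smul]
              rfl
            rw [e]
            have hb1 := hbz α hα
            have hb2 : (α : WeakDual ℝ E) x₀ ≤ f x₀ := hsub1 hα x₀ hx₀
            have e1 := mul_le_mul_of_nonneg_left hb1 (by linarith : (0:ℝ) ≤ 1 - t)
            have e2 := mul_le_mul_of_nonneg_left hb2 ht.le
            linarith
          have h4 : f ((1-t) • z + t • x₀) ≤ (1-t) * m + t * f x₀ := by
            have h5 : ((f ((1-t) • z + t • x₀) : ℝ) : EReal)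
                ≤ (((1-t) * m + t * f x₀ : ℝ) : EReal) := by
              rw [← hval' _ hp]
              exact h3
            exact EReal.coe_le_coe_iff.1 h5
          have e2 : (β : WeakDual ℝ E) ((1-t) • z + t • x₀) = (1-t) * β z + t * β x₀ := by
            rw [map_add, map_smul, map_smul]
            rfl
          rw [e2] at h1
          linarith
        have hg : Tendsto (fun t : ℝ => (1-t) * β z + t * β x₀) (𝓝[>] (0:ℝ)) (𝓝 (β z)) := by
          have hcont : Continuous fun t : ℝ => (1-t) * β z + t * β x₀ :=
            ((continuous_const.sub continuous_id).mul continuous_const).add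
              (continuous_id.mul continuous_const)
          have h1 := hcont.tendsto 0
          norm_num at h1
          exact h1.mono_left nhdsWithin_le_nhds
        have hh : Tendsto (fun t : ℝ => (1-t) * m + t * f x₀) (𝓝[>] (0:ℝ)) (𝓝 m) := by
          have hcont : Continuous fun t : ℝ => (1-t) * m + t * f x₀ :=
            ((continuous_const.sub continuous_id).mul continuous_const).add
              (continuous_id.mul continuous_const)
          have h1 := hcont.tendsto 0
          norm_num at h1
          exact h1.mono_left nhdsWithin_le_nhds
        refine le_of_tendsto_of_tendsto hg hh ?_
        filter_upwards [Ioc_mem_nhdsGT_of_mem (Set.left_mem_Ico.2 zero_lt_one)] with t ht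
        exact hineq2 t ht.1 ht.2
      · push_neg at hD
        exact le_trans le_top hD
    have h6 : supportFunctional C' z ≤ (u : EReal) :=
      supportFunctional_le fun α hα => le_of_lt (by rw [← hz α]; exact hφ1 α hα)
    have h7 : (u : EReal) < ((β z : ℝ) : EReal) := by
      rw [EReal.coe_lt_coe_iff, ← hz β]
      exact hφ2
    exact absurd (hkey.trans h6) (not_le.2 h7)
  exact Subset.antisymm hsub1 hsub2
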